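/- Complex linear de Rham curves (Example 2.3): Let η ∈ ℂ with 0 < |η| < 1 and 0 < |1 − η| < 1, and on X = ℂ set f_0(z) = η z̄ and f_1(z) = η + (1 − η) z̄, where z̄ denotes complex conjugation. Let G : [0,1] → ℂ be the unique continuous solution of G(t) = f_0(G(2t)) for 0 ≤ t ≤ 1/2 and G(t) = f_1(G(2t − 1)) for 1/2 ≤ t ≤ 1, with G(0) = 0 and G(1) = 1. Then α = β = −log_2 |η(1 − η)| / 2; if |η(1 − η)| < 1/4 then the Fréchet derivative of G exists and is zero Lebesgue-a.e., and if |η(1 − η)| > 1/4 then G is not Fréchet differentiable at Lebesgue-a.e. t. -/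

import Mathlib

open MeasureTheory Filter Set Topology
open scoped ENNReal NNReal

noncomputable section

/-- The first digit `A₁(t) = ⌊m t⌋` of the `m`-adic expansion of `t ∈ [0,1)`. -/
def A1 (m : ℕ) (t : ℝ) : ℕ := (⌊(m : ℝ) * t⌋).toNat

/-- The shift map `Ht = m t - ⌊m t⌋` on `[0,1)`. -/
def Hmap (m : ℕ) (t : ℝ) : ℝ := (m : ℝ) * t - ⌊(m : ℝ) * t⌋

/-- `‖T⁻¹‖⁻¹`, with the convention that it is `0` when `T` is not invertible. -/
def coNorm {E : Type*} [NormedAddCommGroup E] [NormedSpace ℝ E] (T : E →L[ℝ] E) : ℝ :=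
  ⨆ A : {A : E ≃L[ℝ] E // (A : E →L[ℝ] E) = T}, ‖(A.1.symm : E →L[ℝ] E)‖⁻¹

/-- The maps `f₀(z) = η z̄` and `f₁(z) = η + (1-η) z̄` of Example 2.3, where `z̄` is the
complex conjugate. -/
def fLin (η : ℂ) : ℕ → ℂ → ℂ := fun i z =>
  if i = 0 then η * (starRingEnd ℂ) z else η + (1 - η) * (starRingEnd ℂ) z

/-- `α = ∫₀¹ -log₂ ‖Df_{A₁(t)}(G(Ht))‖ dt`, the Fréchet derivative being taken over `ℝ`
(`ℂ` is regarded as a real two-dimensional Banach space). -/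
def alphaLin (η : ℂ) (G : ℝ → ℂ) : ℝ :=
  ∫ t in Set.Ico (0 : ℝ) 1, -Real.logb 2 ‖fderiv ℝ (fLin η (A1 2 t)) (G (Hmap 2 t))‖

/-- `β = ∫₀¹ log₂ ‖(Df_{A₁(t)}(G(Ht)))⁻¹‖ dt = ∫₀¹ -log₂ ‖(Df_{A₁(t)}(G(Ht)))⁻¹‖⁻¹ dt`. -/
def betaLin (η : ℂ) (G : ℝ → ℂ) : ℝ :=
  ∫ t in Set.Ico (0 : ℝ) 1, -Real.logb 2 (coNorm (fderiv ℝ (fLin η (A1 2 t)) (G (Hmap 2 t))))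

end

noncomputable section

/-- The complex absolute value, as an absolute value (compatibility with the older library). -/
def Complex.abs : AbsoluteValue ℂ ℝ where
  toFun z := ‖z‖
  map_mul' := norm_mul
  nonneg' := norm_nonneg
  eq_zero' _ := norm_eq_zero
  add_le' := norm_add_le

lemma Complex.norm_eq_abs (z : ℂ) : ‖z‖ = Complex.abs z := rfl

lemma Complex.abs_conj (z : ℂ) : Complex.abs ((starRingEnd ℂ) z) = Complex.abs z := by
  rw [← Complex.norm_eq_abs, ← Complex.norm_eq_abs, Complex.norm_conj]

lemma Complex.continuous_abs : Continuous Complex.abs := continuous_norm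

/-- multiplication by `c` composed with conjugation, as a real-linear equivalence. -/
def mulConjLE (c : ℂ) (hc : c ≠ 0) : ℂ ≃ₗ[ℝ] ℂ where
  toFun z := c * (starRingEnd ℂ) z
  invFun w := (starRingEnd ℂ) (c⁻¹ * w)
  map_add' x y := by simp [map_add]; ring
  map_smul' r z := by simp [Complex.real_smul]; ring
  left_inv z := by field_simp; simp only [starRingEnd_self_apply]
  right_inv w := by field_simp; simp only [starRingEnd_self_apply]; field_simp

def mulConjCLE (c : ℂ) (hc : c ≠ 0) : ℂ ≃L[ℝ] ℂ := (mulConjLE c hc).toContinuousLinearEquiv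

lemma mulConjCLE_apply (c : ℂ) (hc : c ≠ 0) (z : ℂ) :
    mulConjCLE c hc z = c * (starRingEnd ℂ) z := rfl

lemma mulConjCLE_symm_apply (c : ℂ) (hc : c ≠ 0) (w : ℂ) :
    (mulConjCLE c hc).symm w = (starRingEnd ℂ) (c⁻¹ * w) := rfl

lemma opNorm_mulConj (c : ℂ) (hc : c ≠ 0) :
    ‖((mulConjCLE c hc) : ℂ →L[ℝ] ℂ)‖ = Complex.abs c := by
  refine le_antisymm (ContinuousLinearMap.opNorm_le_bound _ (Complex.abs.nonneg c) fun z => ?_) ?_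
  · simp [mulConjCLE_apply, Complex.norm_eq_abs, map_mul]
  · have h := ((mulConjCLE c hc : ℂ →L[ℝ] ℂ)).le_opNorm 1
    simpa [mulConjCLE_apply, Complex.norm_eq_abs] using h

lemma coNorm_mulConj (c : ℂ) (hc : c ≠ 0) :
    coNorm ((mulConjCLE c hc) : ℂ →L[ℝ] ℂ) = Complex.abs c := by
  have hsub : Subsingleton {A : ℂ ≃L[ℝ] ℂ // (A : ℂ →L[ℝ] ℂ) = ((mulConjCLE c hc) : ℂ →L[ℝ] ℂ)} := by
    constructor
    rintro ⟨A, hA⟩ ⟨B, hB⟩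
    ext z
    have : (A : ℂ →L[ℝ] ℂ) z = (B : ℂ →L[ℝ] ℂ) z := by rw [hA, hB]
    simpa using this
  have : Unique {A : ℂ ≃L[ℝ] ℂ // (A : ℂ →L[ℝ] ℂ) = ((mulConjCLE c hc) : ℂ →L[ℝ] ℂ)} :=
    @Unique.mk' _ ⟨⟨mulConjCLE c hc, rfl⟩⟩ hsub
  rw [coNorm, ciSup_unique]
  have hd : (default : {A : ℂ ≃L[ℝ] ℂ // (A : ℂ →L[ℝ] ℂ) = ((mulConjCLE c hc) : ℂ →L[ℝ] ℂ)}) =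
      ⟨mulConjCLE c hc, rfl⟩ := Subsingleton.elim _ _
  rw [hd]
  have hc' : (starRingEnd ℂ) c⁻¹ ≠ 0 := by simpa using hc
  have hsymm : ((mulConjCLE c hc).symm : ℂ →L[ℝ] ℂ) =
      ((mulConjCLE ((starRingEnd ℂ) c⁻¹) hc') : ℂ →L[ℝ] ℂ) := by
    ext w
    simp [mulConjCLE_symm_apply, mulConjCLE_apply, map_mul, mul_comm]
  simp only [hsymm, opNorm_mulConj]
  rw [Complex.abs_conj]; simp

lemma fderiv_fLin0 (η : ℂ) (hη : η ≠ 0) (z : ℂ) :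
    fderiv ℝ (fLin η 0) z = ((mulConjCLE η hη) : ℂ →L[ℝ] ℂ) := by
  have hfun : fLin η 0 = ⇑((mulConjCLE η hη) : ℂ →L[ℝ] ℂ) := by
    funext w; simp [fLin, mulConjCLE_apply]
  rw [hfun]
  exact ContinuousLinearMap.fderiv _

lemma fderiv_fLin1 (η : ℂ) (hη : 1 - η ≠ 0) (z : ℂ) :
    fderiv ℝ (fLin η 1) z = ((mulConjCLE (1-η) hη) : ℂ →L[ℝ] ℂ) := by
  have h : HasFDerivAt (fLin η 1) ((mulConjCLE (1-η) hη) : ℂ →L[ℝ] ℂ) z := by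
    have h1 : HasFDerivAt (fun w => η + ((mulConjCLE (1-η) hη) : ℂ →L[ℝ] ℂ) w)
        ((mulConjCLE (1-η) hη) : ℂ →L[ℝ] ℂ) z :=
      (((mulConjCLE (1-η) hη) : ℂ →L[ℝ] ℂ).hasFDerivAt).const_add η
    have : fLin η 1 = fun w => η + ((mulConjCLE (1-η) hη) : ℂ →L[ℝ] ℂ) w := by
      funext w; simp [fLin, mulConjCLE_apply]
    rw [this]; exact h1
  exact h.fderiv

lemma integral_step (f : ℝ → ℝ) (a b : ℝ) (h0 : ∀ t ∈ Ico (0:ℝ) (1/2), f t = a)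
    (h1 : ∀ t ∈ Ico (1/2:ℝ) 1, f t = b) : ∫ t in Ico (0:ℝ) 1, f t = (a+b)/2 := by
  have hsplit : Ico (0:ℝ) 1 = Ico 0 (1/2) ∪ Ico (1/2) 1 :=
    (Set.Ico_union_Ico_eq_Ico (by norm_num) (by norm_num)).symm
  have hint0 : IntegrableOn f (Ico (0:ℝ) (1/2)) := by
    refine (integrableOn_congr_fun h0 measurableSet_Ico).2 ?_
    exact integrableOn_const (by simp [Real.volume_Ico])
  have hint1 : IntegrableOn f (Ico (1/2:ℝ) 1) := by
    refine (integrableOn_congr_fun h1 measurableSet_Ico).2 ?_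
    exact integrableOn_const (by simp [Real.volume_Ico])
  rw [hsplit, setIntegral_union (Set.Ico_disjoint_Ico_same)
      measurableSet_Ico hint0 hint1,
    setIntegral_congr_fun measurableSet_Ico h0, setIntegral_congr_fun measurableSet_Ico h1]
  simp [Real.volume_Ico]
  norm_num
  ring

lemma A1_two_lo {t : ℝ} (ht : t ∈ Ico (0:ℝ) (1/2)) : A1 2 t = 0 := by
  have : ⌊(2:ℝ) * t⌋ = 0 := by
    rw [Int.floor_eq_zero_iff]
    constructor
    · linarith [ht.1]
    · have := ht.2; linarith
  simp [A1, this]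

lemma A1_two_hi {t : ℝ} (ht : t ∈ Ico (1/2:ℝ) 1) : A1 2 t = 1 := by
  have : ⌊(2:ℝ) * t⌋ = 1 := by
    rw [Int.floor_eq_iff]
    constructor
    · push_cast; linarith [ht.1]
    · push_cast; linarith [ht.2]
  simp [A1, this]

lemma alphaLin_eval (η : ℂ) (hη : η ≠ 0) (hη' : 1 - η ≠ 0) (G : ℝ → ℂ) :
    alphaLin η G = -Real.logb 2 (Complex.abs (η * (1 - η))) / 2 := by
  rw [alphaLin, integral_step _ (-Real.logb 2 (Complex.abs η)) (-Real.logb 2 (Complex.abs (1-η)))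
    (fun t ht => by rw [A1_two_lo ht, fderiv_fLin0 η hη, opNorm_mulConj])
    (fun t ht => by rw [A1_two_hi ht, fderiv_fLin1 η hη', opNorm_mulConj])]
  rw [map_mul, Real.logb_mul (by simpa using hη) (by simpa [sub_eq_zero] using hη')]
  ring

lemma betaLin_eval (η : ℂ) (hη : η ≠ 0) (hη' : 1 - η ≠ 0) (G : ℝ → ℂ) :
    betaLin η G = -Real.logb 2 (Complex.abs (η * (1 - η))) / 2 := by
  rw [betaLin, integral_step _ (-Real.logb 2 (Complex.abs η)) (-Real.logb 2 (Complex.abs (1-η)))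
    (fun t ht => by rw [A1_two_lo ht, fderiv_fLin0 η hη, coNorm_mulConj])
    (fun t ht => by rw [A1_two_hi ht, fderiv_fLin1 η hη', coNorm_mulConj])]
  rw [map_mul, Real.logb_mul (by simpa using hη) (by simpa [sub_eq_zero] using hη')]
  ring

def dg (i : ℕ) (t : ℝ) : ℤ := ⌊(2:ℝ)^(i+1) * t⌋ - 2 * ⌊(2:ℝ)^i * t⌋

lemma floor_two_mul_bounds (x : ℝ) : 2*⌊x⌋ ≤ ⌊2*x⌋ ∧ ⌊2*x⌋ ≤ 2*⌊x⌋+1 := by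
  constructor
  · rw [Int.le_floor]; push_cast; linarith [Int.floor_le x]
  · have : ⌊2*x⌋ < 2*⌊x⌋ + 2 := by
      rw [Int.floor_lt]; push_cast; linarith [Int.lt_floor_add_one x]
    omega

lemma dg_eq_zero_or_one (i : ℕ) (t : ℝ) : dg i t = 0 ∨ dg i t = 1 := by
  have h : (2:ℝ)^(i+1) * t = 2 * ((2:ℝ)^i * t) := by ring
  have := floor_two_mul_bounds ((2:ℝ)^i * t)
  rw [dg, h]
  omega

lemma dg_succ (i : ℕ) (t : ℝ) : dg (i+1) t = dg i (2*t) := by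
  have h1 : (2:ℝ)^(i+1+1)*t = 2^(i+1)*(2*t) := by ring
  have h2 : (2:ℝ)^(i+1)*t = 2^i*(2*t) := by ring
  rw [dg, dg, h1, h2]

lemma dg_add_one (i : ℕ) (t : ℝ) : dg i (t+1) = dg i t := by
  have h1 : (2:ℝ)^(i+1)*(t+1) = 2^(i+1)*t + ((2^(i+1) : ℤ):ℝ) := by push_cast; ring
  have h2 : (2:ℝ)^i*(t+1) = 2^i*t + ((2^i : ℤ):ℝ) := by push_cast; ring
  rw [dg, dg, h1, h2, Int.floor_add_intCast, Int.floor_add_intCast]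
  ring

def Pr (c0 c1 : ℝ) (n : ℕ) (t : ℝ) : ℝ :=
  ∏ i ∈ Finset.range n, (if dg i t = 0 then c0 else c1)

lemma Pr_pos {c0 c1 : ℝ} (h0 : 0 < c0) (h1 : 0 < c1) (n : ℕ) (t : ℝ) : 0 < Pr c0 c1 n t :=
  Finset.prod_pos fun i _ => by split <;> assumption

lemma Pr_succ_left (c0 c1 : ℝ) (n : ℕ) (t : ℝ) :
    Pr c0 c1 (n+1) t = (if dg 0 t = 0 then c0 else c1) * Pr c0 c1 n (2*t) := by
  rw [Pr, Finset.prod_range_succ']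
  rw [mul_comm]
  congr 1
  exact Finset.prod_congr rfl fun i _ => by rw [dg_succ]

lemma Pr_add_one (c0 c1 : ℝ) (n : ℕ) (t : ℝ) : Pr c0 c1 n (t+1) = Pr c0 c1 n t :=
  Finset.prod_congr rfl fun i _ => by rw [dg_add_one]

lemma dg_zero_lo {t : ℝ} (h0 : 0 ≤ t) (h1 : t < 1/2) : dg 0 t = 0 := by
  have e1 : (2:ℝ)^(0+1) * t = 2*t := by norm_num
  have e2 : (2:ℝ)^0 * t = t := by norm_num
  have ha : ⌊(2:ℝ)*t⌋ = 0 := by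
    rw [Int.floor_eq_zero_iff, Set.mem_Ico]; constructor <;> linarith
  have hb : ⌊t⌋ = 0 := by
    rw [Int.floor_eq_zero_iff, Set.mem_Ico]; constructor <;> linarith
  rw [dg, e1, e2, ha, hb]; ring

lemma dg_zero_hi {t : ℝ} (h0 : 1/2 ≤ t) (h1 : t < 1) : dg 0 t = 1 := by
  have e1 : (2:ℝ)^(0+1) * t = 2*t := by norm_num
  have e2 : (2:ℝ)^0 * t = t := by norm_num
  have ha : ⌊(2:ℝ)*t⌋ = 1 := by
    rw [Int.floor_eq_iff]; push_cast; constructor <;> linarith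
  have hb : ⌊t⌋ = 0 := by
    rw [Int.floor_eq_zero_iff, Set.mem_Ico]; constructor <;> linarith
  rw [dg, e1, e2, ha, hb]; ring

def dll (n : ℕ) (t : ℝ) : ℝ := ((⌊(2:ℝ)^n*t⌋ : ℤ) : ℝ)/2^n

lemma dll_nonneg {n : ℕ} {t : ℝ} (h0 : 0 ≤ t) : 0 ≤ dll n t := by
  apply div_nonneg _ (by positivity)
  exact_mod_cast Int.floor_nonneg.2 (by positivity)

lemma dll_le_self (n : ℕ) (t : ℝ) : dll n t ≤ t := by
  rw [dll, div_le_iff₀ (by positivity)]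
  calc ((⌊(2:ℝ)^n*t⌋ : ℤ) : ℝ) ≤ (2:ℝ)^n*t := Int.floor_le _
  _ = t * 2^n := by ring

lemma lt_dll_add (n : ℕ) (t : ℝ) : t < dll n t + (1/2)^n := by
  rw [dll, one_div_pow, ← add_div, lt_div_iff₀ (by positivity : (0:ℝ) < 2^n)]
  have := Int.lt_floor_add_one ((2:ℝ)^n*t)
  push_cast at this ⊢
  linarith

theorem keyS (η : ℂ) (G : ℝ → ℂ)
    (hGeq0 : ∀ t : ℝ, 0 ≤ t → t ≤ 1 / 2 → G t = fLin η 0 (G (2 * t)))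
    (hGeq1 : ∀ t : ℝ, 1 / 2 ≤ t → t ≤ 1 → G t = fLin η 1 (G (2 * t - 1))) :
    ∀ (n : ℕ) (t : ℝ), 0 ≤ t → t < 1 → ∀ s1 s2 : ℝ,
      s1 ∈ Icc (dll n t) (dll n t + (1/2)^n) → s2 ∈ Icc (dll n t) (dll n t + (1/2)^n) →
      Complex.abs (G s1 - G s2) =
        Pr (Complex.abs η) (Complex.abs (1-η)) n t *
          Complex.abs (G ((2:ℝ)^n*(s1 - dll n t)) - G ((2:ℝ)^n*(s2 - dll n t))) := by
  intro n
  induction n with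
  | zero =>
    intro t ht0 ht1 s1 s2 _ _
    have hfl : ⌊(2:ℝ)^0*t⌋ = 0 := by
      rw [Int.floor_eq_zero_iff, Set.mem_Ico]; constructor <;> simp <;> linarith
    have : dll 0 t = 0 := by rw [dll, hfl]; simp
    simp [Pr, this]
  | succ n ih =>
    intro t ht0 ht1 s1 s2 hs1 hs2
    have hp2 : (0:ℝ) < 2^(n+1) := by positivity
    have hp2n : (0:ℝ) < 2^n := by positivity
    have hpow : ((1:ℝ)/2)^(n+1) = 1/2^(n+1) := one_div_pow _ _
    have hpown : ((1:ℝ)/2)^n = 1/2^n := one_div_pow _ _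
    have hps : (2:ℝ)^(n+1) = 2*2^n := by ring
    rcases lt_or_ge t (1/2) with hc | hc
    · -- low case
      have hfl : ⌊(2:ℝ)^n*(2*t)⌋ = ⌊(2:ℝ)^(n+1)*t⌋ := by
        rw [show (2:ℝ)^n*(2*t) = 2^(n+1)*t by ring]
      have hdll : dll n (2*t) = 2 * dll (n+1) t := by
        rw [dll, dll, hfl]; field_simp; ring
      have hflt : ⌊(2:ℝ)^(n+1)*t⌋ < (2:ℤ)^n := by
        rw [Int.floor_lt]; push_cast; nlinarith
      have hF : ((⌊(2:ℝ)^(n+1)*t⌋ : ℤ) : ℝ) ≤ 2^n - 1 := by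
        have : ⌊(2:ℝ)^(n+1)*t⌋ ≤ (2:ℤ)^n - 1 := by omega
        calc ((⌊(2:ℝ)^(n+1)*t⌋ : ℤ) : ℝ) ≤ (((2:ℤ)^n - 1 : ℤ) : ℝ) := by exact_mod_cast this
        _ = 2^n - 1 := by push_cast; ring
      have hub : dll (n+1) t + (1/2)^(n+1) ≤ 1/2 := by
        rw [dll, hpow, ← add_div, div_le_iff₀ hp2]
        nlinarith
      have hlb : 0 ≤ dll (n+1) t := dll_nonneg ht0
      have e1 : G s1 = η * (starRingEnd ℂ) (G (2*s1)) := by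
        have := hGeq0 s1 (le_trans hlb hs1.1) (le_trans hs1.2 hub); simpa [fLin] using this
      have e2 : G s2 = η * (starRingEnd ℂ) (G (2*s2)) := by
        have := hGeq0 s2 (le_trans hlb hs2.1) (le_trans hs2.2 hub); simpa [fLin] using this
      have hh : (1:ℝ)/2^(n+1)*2 = 1/2^n := by rw [hps]; field_simp
      have hmem1 : 2*s1 ∈ Icc (dll n (2*t)) (dll n (2*t) + (1/2)^n) := by
        rw [hdll]; have h1 := hs1.1; have h2 := hs1.2; rw [hpow] at h2; rw [hpown]
        constructor <;> linarith
      have hmem2 : 2*s2 ∈ Icc (dll n (2*t)) (dll n (2*t) + (1/2)^n) := by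
        rw [hdll]; have h1 := hs2.1; have h2 := hs2.2; rw [hpow] at h2; rw [hpown]
        constructor <;> linarith
      have key := ih (2*t) (by linarith) (by linarith) (2*s1) (2*s2) hmem1 hmem2
      have ed : G s1 - G s2 = η * (starRingEnd ℂ) (G (2*s1) - G (2*s2)) := by
        rw [e1, e2, map_sub]; ring
      rw [ed, map_mul, Complex.abs_conj, key, Pr_succ_left, if_pos (dg_zero_lo ht0 hc)]
      have a1 : (2:ℝ)^n*(2*s1 - dll n (2*t)) = 2^(n+1)*(s1 - dll (n+1) t) := by
        rw [hdll]; ring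
      have a2 : (2:ℝ)^n*(2*s2 - dll n (2*t)) = 2^(n+1)*(s2 - dll (n+1) t) := by
        rw [hdll]; ring
      rw [a1, a2]; ring
    · -- high case
      have hfl : ⌊(2:ℝ)^n*(2*t-1)⌋ = ⌊(2:ℝ)^(n+1)*t⌋ - 2^n := by
        have harg : (2:ℝ)^n*(2*t-1) = 2^(n+1)*t + ((-(2^n):ℤ):ℝ) := by push_cast; ring
        rw [harg, Int.floor_add_intCast]; ring
      have hdll : dll n (2*t-1) = 2 * dll (n+1) t - 1 := by
        rw [dll, dll, hfl]; push_cast; field_simp; ring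
      have hlbF : (2:ℤ)^n ≤ ⌊(2:ℝ)^(n+1)*t⌋ := by
        rw [Int.le_floor]; push_cast; nlinarith
      have hlbF' : (2:ℝ)^n ≤ ((⌊(2:ℝ)^(n+1)*t⌋ : ℤ) : ℝ) := by exact_mod_cast hlbF
      have hubF : ⌊(2:ℝ)^(n+1)*t⌋ < (2:ℤ)^(n+1) := by
        rw [Int.floor_lt]; push_cast; nlinarith
      have hubF' : ((⌊(2:ℝ)^(n+1)*t⌋ : ℤ) : ℝ) ≤ 2^(n+1) - 1 := by
        have : ⌊(2:ℝ)^(n+1)*t⌋ ≤ (2:ℤ)^(n+1) - 1 := by omega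
        calc ((⌊(2:ℝ)^(n+1)*t⌋ : ℤ) : ℝ) ≤ (((2:ℤ)^(n+1) - 1 : ℤ) : ℝ) := by exact_mod_cast this
        _ = 2^(n+1) - 1 := by push_cast; ring
      have hlb : 1/2 ≤ dll (n+1) t := by
        rw [dll, le_div_iff₀ hp2]; nlinarith
      have hub : dll (n+1) t + (1/2)^(n+1) ≤ 1 := by
        rw [dll, hpow, ← add_div, div_le_iff₀ hp2]; nlinarith
      have e1 : G s1 = η + (1-η) * (starRingEnd ℂ) (G (2*s1 - 1)) := by
        have := hGeq1 s1 (le_trans hlb hs1.1) (le_trans hs1.2 hub); simpa [fLin] using this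
      have e2 : G s2 = η + (1-η) * (starRingEnd ℂ) (G (2*s2 - 1)) := by
        have := hGeq1 s2 (le_trans hlb hs2.1) (le_trans hs2.2 hub); simpa [fLin] using this
      have hh : (1:ℝ)/2^(n+1)*2 = 1/2^n := by rw [hps]; field_simp
      have hmem1 : 2*s1 - 1 ∈ Icc (dll n (2*t-1)) (dll n (2*t-1) + (1/2)^n) := by
        rw [hdll]; have h1 := hs1.1; have h2 := hs1.2; rw [hpow] at h2; rw [hpown]
        constructor <;> linarith
      have hmem2 : 2*s2 - 1 ∈ Icc (dll n (2*t-1)) (dll n (2*t-1) + (1/2)^n) := by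
        rw [hdll]; have h1 := hs2.1; have h2 := hs2.2; rw [hpow] at h2; rw [hpown]
        constructor <;> linarith
      have key := ih (2*t-1) (by linarith) (by linarith) (2*s1-1) (2*s2-1) hmem1 hmem2
      have ed : G s1 - G s2 = (1-η) * (starRingEnd ℂ) (G (2*s1-1) - G (2*s2-1)) := by
        rw [e1, e2, map_sub]; ring
      rw [ed, map_mul, Complex.abs_conj, key, Pr_succ_left,
        if_neg (by rw [dg_zero_hi hc ht1]; norm_num)]
      have hPr : Pr (Complex.abs η) (Complex.abs (1-η)) n (2*t) =
          Pr (Complex.abs η) (Complex.abs (1-η)) n (2*t-1) := by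
        rw [show (2*t) = (2*t-1)+1 by ring, Pr_add_one]; norm_num
      have a1 : (2:ℝ)^n*((2*s1-1) - dll n (2*t-1)) = 2^(n+1)*(s1 - dll (n+1) t) := by
        rw [hdll]; ring
      have a2 : (2:ℝ)^n*((2*s2-1) - dll n (2*t-1)) = 2^(n+1)*(s2 - dll (n+1) t) := by
        rw [hdll]; ring
      rw [a1, a2, hPr]; ring

/-- floor is constant on dyadic intervals -/
lemma floor_const_on_dyadic {j : ℕ} {k : ℕ} {x : ℝ}
    (hx1 : (k:ℝ)/2^j ≤ x) (hx2 : x < ((k:ℝ)+1)/2^j) : ⌊x⌋ = ⌊(k:ℝ)/2^j⌋ := by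
  have hp : (0:ℝ) < 2^j := by positivity
  have h1 : ⌊(k:ℝ)/2^j⌋ ≤ ⌊x⌋ := Int.floor_le_floor hx1
  have hz : ⌊x⌋ * (2:ℤ)^j < (k:ℤ) + 1 := by
    have hr : ((⌊x⌋ * (2:ℤ)^j : ℤ):ℝ) < (k:ℝ) + 1 := by
      push_cast
      have h3 : (⌊x⌋:ℝ) ≤ x := Int.floor_le x
      have h4 : x * 2^j < (k:ℝ)+1 := by
        rw [lt_div_iff₀ hp] at hx2; exact hx2
      nlinarith
    exact_mod_cast hr
  have hz' : ⌊x⌋ * (2:ℤ)^j ≤ (k:ℤ) := by omega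
  have h2 : ⌊x⌋ ≤ ⌊(k:ℝ)/2^j⌋ := by
    rw [Int.le_floor, le_div_iff₀ hp]
    exact_mod_cast hz'
  omega

lemma dyadic_floor {n i : ℕ} {k : ℕ} {t : ℝ} (hin : i ≤ n)
    (ht1 : (k:ℝ)/2^n ≤ t) (ht2 : t < ((k:ℝ)+1)/2^n) :
    ⌊(2:ℝ)^i * t⌋ = ⌊(k:ℝ)/2^(n-i)⌋ := by
  have hsplit : (2:ℝ)^n = 2^i * 2^(n-i) := by
    rw [← pow_add]; congr 1; omega
  have hp : (0:ℝ) < 2^i := by positivity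
  have hq : (0:ℝ) < 2^(n-i) := by positivity
  apply floor_const_on_dyadic (j := n - i) (k := k)
  · calc (k:ℝ)/2^(n-i) = 2^i * ((k:ℝ)/2^n) := by rw [hsplit]; field_simp
    _ ≤ 2^i * t := by nlinarith
    
  · calc (2:ℝ)^i * t < 2^i * (((k:ℝ)+1)/2^n) := by nlinarith
    _ = ((k:ℝ)+1)/2^(n-i) := by rw [hsplit]; field_simp

lemma Pr_const_on_dyadic (c0 c1 : ℝ) {n : ℕ} {k : ℕ} {t : ℝ}
    (ht1 : (k:ℝ)/2^n ≤ t) (ht2 : t < ((k:ℝ)+1)/2^n) :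
    Pr c0 c1 n t = Pr c0 c1 n ((k:ℝ)/2^n) := by
  have h2n : (0:ℝ) < 2^n := by positivity
  have hkk : ((k:ℝ))/2^n < ((k:ℝ)+1)/2^n := by
    rw [div_lt_div_iff₀ h2n h2n]; nlinarith
  apply Finset.prod_congr rfl
  intro i hi
  rw [Finset.mem_range] at hi
  have e1 : ⌊(2:ℝ)^i * t⌋ = ⌊(2:ℝ)^i * ((k:ℝ)/2^n)⌋ := by
    rw [dyadic_floor (le_of_lt hi) ht1 ht2,
      dyadic_floor (le_of_lt hi) (le_refl _) hkk]
  have e2 : ⌊(2:ℝ)^(i+1) * t⌋ = ⌊(2:ℝ)^(i+1) * ((k:ℝ)/2^n)⌋ := by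
    rw [dyadic_floor hi ht1 ht2, dyadic_floor hi (le_refl _) hkk]
  have ed : dg i t = dg i ((k:ℝ)/2^n) := by rw [dg, dg, e1, e2]
  rw [ed]


lemma Pr_dyadic_lo (c0 c1 : ℝ) {n k : ℕ} (hk : k < 2^n) :
    Pr c0 c1 (n+1) ((k:ℝ)/2^(n+1)) = c0 * Pr c0 c1 n ((k:ℝ)/2^n) := by
  have hkr : (k:ℝ) < 2^n := by exact_mod_cast hk
  have h1 : (0:ℝ) ≤ (k:ℝ)/2^(n+1) := by positivity
  have h2 : ((k:ℝ))/2^(n+1) < 1/2 := by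
    rw [div_lt_iff₀ (by positivity)]
    calc (k:ℝ) < 2^n := hkr
    _ = 1/2*2^(n+1) := by ring
  rw [Pr_succ_left, if_pos (dg_zero_lo h1 h2)]
  congr 1
  rw [show 2*((k:ℝ)/2^(n+1)) = (k:ℝ)/2^n by field_simp; ring]

lemma Pr_dyadic_hi (c0 c1 : ℝ) {n k : ℕ} (hk : k < 2^n) :
    Pr c0 c1 (n+1) (((2^n + k : ℕ):ℝ)/2^(n+1)) = c1 * Pr c0 c1 n ((k:ℝ)/2^n) := by
  have hkr : (k:ℝ) < 2^n := by exact_mod_cast hk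
  have hk0 : (0:ℝ) ≤ (k:ℝ) := Nat.cast_nonneg k
  have hps : (2:ℝ)^(n+1) = 2*2^n := by ring
  have hc : ((2^n + k : ℕ):ℝ) = 2^n + (k:ℝ) := by push_cast; ring
  have h1 : 1/2 ≤ ((2^n + k : ℕ):ℝ)/2^(n+1) := by
    rw [hc, le_div_iff₀ (by positivity), hps]; linarith
  have h2 : ((2^n + k : ℕ):ℝ)/2^(n+1) < 1 := by
    rw [hc, div_lt_iff₀ (by positivity), hps]; linarith
  rw [Pr_succ_left, if_neg (by rw [dg_zero_hi h1 h2]; norm_num)]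
  congr 1
  rw [show 2*(((2^n + k : ℕ):ℝ)/2^(n+1)) = (k:ℝ)/2^n + 1 by rw [hc]; field_simp; ring,
    Pr_add_one]

lemma sum_Pr_rpow (c0 c1 : ℝ) (h0 : 0 < c0) (h1 : 0 < c1) (u : ℝ) :
    ∀ n, ∑ k ∈ Finset.range (2^n), (Pr c0 c1 n ((k:ℝ)/2^n))^u = (c0^u + c1^u)^n := by
  intro n
  induction n with
  | zero => simp [Pr]
  | succ n ih =>
    have hsplit : (2:ℕ)^(n+1) = 2^n + 2^n := by ring
    rw [hsplit, Finset.sum_range_add]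
    have e1 : ∀ k ∈ Finset.range (2^n),
        (Pr c0 c1 (n+1) ((k:ℝ)/2^(n+1)))^u = c0^u * (Pr c0 c1 n ((k:ℝ)/2^n))^u := by
      intro k hk
      rw [Pr_dyadic_lo c0 c1 (Finset.mem_range.1 hk),
        Real.mul_rpow h0.le (Pr_pos h0 h1 _ _).le]
    have e2 : ∀ k ∈ Finset.range (2^n),
        (Pr c0 c1 (n+1) (((2^n + k : ℕ):ℝ)/2^(n+1)))^u = c1^u * (Pr c0 c1 n ((k:ℝ)/2^n))^u := by
      intro k hk
      rw [Pr_dyadic_hi c0 c1 (Finset.mem_range.1 hk),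
        Real.mul_rpow h1.le (Pr_pos h0 h1 _ _).le]
    rw [Finset.sum_congr rfl e1, Finset.sum_congr rfl e2, ← Finset.mul_sum, ← Finset.mul_sum,
      ih, pow_succ]
    ring

lemma measure_biUnion_dyadic_le (F : Finset ℕ) (n : ℕ) (a : ℝ) :
    volume (⋃ k ∈ F, Ico ((k:ℝ)/2^n + a) (((k:ℝ)+1)/2^n + a))
      ≤ (F.card : ℝ≥0∞) * ENNReal.ofReal ((1/2)^n) := by
  refine le_trans (measure_biUnion_finset_le F _) ?_
  have hvol : ∀ k : ℕ, volume (Ico ((k:ℝ)/2^n + a) (((k:ℝ)+1)/2^n + a))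
      = ENNReal.ofReal ((1/2)^n) := by
    intro k
    rw [Real.volume_Ico]
    congr 1
    rw [one_div_pow]
    field_simp
    ring
  simp_rw [hvol, Finset.sum_const, nsmul_eq_mul]
  exact le_refl _

lemma card_filter_ge_le (c0 c1 : ℝ) (h0 : 0 < c0) (h1 : 0 < c1) {u x : ℝ}
    (hu : 0 < u) (hx : 0 < x) (n : ℕ) :
    (((Finset.range (2^n)).filter (fun k : ℕ => x ≤ Pr c0 c1 n ((k:ℝ)/2^n))).card : ℝ)
        * ((1:ℝ)/2)^n
      ≤ x^(-u) * ((c0^u + c1^u)/2)^n := by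
  set F := (Finset.range (2^n)).filter (fun k : ℕ => x ≤ Pr c0 c1 n ((k:ℝ)/2^n)) with hF
  have hterm : ∀ k ∈ F, ((1:ℝ)/2)^n ≤ (1/2)^n * (x^(-u) * (Pr c0 c1 n ((k:ℝ)/2^n))^u) := by
    intro k hk
    have hkx : x ≤ Pr c0 c1 n ((k:ℝ)/2^n) := (Finset.mem_filter.1 hk).2
    have hb : 1 ≤ x⁻¹ * Pr c0 c1 n ((k:ℝ)/2^n) := by
      rw [← inv_mul_cancel₀ hx.ne']
      exact mul_le_mul_of_nonneg_left hkx (by positivity)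
    have hb2 : 1 ≤ (x⁻¹ * Pr c0 c1 n ((k:ℝ)/2^n))^u :=
      Real.one_le_rpow hb hu.le
    have he : (x⁻¹ * Pr c0 c1 n ((k:ℝ)/2^n))^u = x^(-u) * (Pr c0 c1 n ((k:ℝ)/2^n))^u := by
      rw [Real.mul_rpow (by positivity) (Pr_pos h0 h1 _ _).le, Real.inv_rpow hx.le,
        ← Real.rpow_neg hx.le]
    rw [he] at hb2
    nlinarith [pow_pos (by norm_num : (0:ℝ) < 1/2) n]
  calc (F.card : ℝ) * ((1:ℝ)/2)^n = ∑ _k ∈ F, ((1:ℝ)/2)^n := by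
        rw [Finset.sum_const, nsmul_eq_mul]
  _ ≤ ∑ k ∈ F, (1/2)^n * (x^(-u) * (Pr c0 c1 n ((k:ℝ)/2^n))^u) := Finset.sum_le_sum hterm
  _ ≤ ∑ k ∈ Finset.range (2^n), (1/2)^n * (x^(-u) * (Pr c0 c1 n ((k:ℝ)/2^n))^u) := by
        apply Finset.sum_le_sum_of_subset_of_nonneg (Finset.filter_subset _ _)
        intro k _ _
        have := (Pr_pos h0 h1 n ((k:ℝ)/2^n)).le
        positivity
  _ = x^(-u) * ((c0^u + c1^u)/2)^n := by
        simp_rw [← Finset.mul_sum]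
        rw [sum_Pr_rpow c0 c1 h0 h1 u n,
          show ((c0^u + c1^u)/2)^n = ((1:ℝ)/2)^n * (c0^u+c1^u)^n by rw [← mul_pow]; ring_nf]
        ring

lemma card_filter_le_le (c0 c1 : ℝ) (h0 : 0 < c0) (h1 : 0 < c1) {u x : ℝ}
    (hu : 0 < u) (hx : 0 < x) (n : ℕ) :
    (((Finset.range (2^n)).filter (fun k : ℕ => Pr c0 c1 n ((k:ℝ)/2^n) ≤ x)).card : ℝ)
        * ((1:ℝ)/2)^n
      ≤ x^u * ((c0^(-u) + c1^(-u))/2)^n := by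
  set F := (Finset.range (2^n)).filter (fun k : ℕ => Pr c0 c1 n ((k:ℝ)/2^n) ≤ x) with hF
  have hterm : ∀ k ∈ F, ((1:ℝ)/2)^n ≤ (1/2)^n * (x^u * (Pr c0 c1 n ((k:ℝ)/2^n))^(-u)) := by
    intro k hk
    have hkx : Pr c0 c1 n ((k:ℝ)/2^n) ≤ x := (Finset.mem_filter.1 hk).2
    have hPp := Pr_pos h0 h1 n ((k:ℝ)/2^n)
    have hb : 1 ≤ x * (Pr c0 c1 n ((k:ℝ)/2^n))⁻¹ := by
      rw [← mul_inv_cancel₀ hPp.ne']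
      exact mul_le_mul_of_nonneg_right hkx (by positivity)
    have hb2 : 1 ≤ (x * (Pr c0 c1 n ((k:ℝ)/2^n))⁻¹)^u := Real.one_le_rpow hb hu.le
    have he : (x * (Pr c0 c1 n ((k:ℝ)/2^n))⁻¹)^u
        = x^u * (Pr c0 c1 n ((k:ℝ)/2^n))^(-u) := by
      rw [Real.mul_rpow hx.le (by positivity), Real.inv_rpow hPp.le, ← Real.rpow_neg hPp.le]
    rw [he] at hb2
    nlinarith [pow_pos (by norm_num : (0:ℝ) < 1/2) n]
  calc (F.card : ℝ) * ((1:ℝ)/2)^n = ∑ _k ∈ F, ((1:ℝ)/2)^n := by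
        rw [Finset.sum_const, nsmul_eq_mul]
  _ ≤ ∑ k ∈ F, (1/2)^n * (x^u * (Pr c0 c1 n ((k:ℝ)/2^n))^(-u)) := Finset.sum_le_sum hterm
  _ ≤ ∑ k ∈ Finset.range (2^n), (1/2)^n * (x^u * (Pr c0 c1 n ((k:ℝ)/2^n))^(-u)) := by
        apply Finset.sum_le_sum_of_subset_of_nonneg (Finset.filter_subset _ _)
        intro k _ _
        have := (Pr_pos h0 h1 n ((k:ℝ)/2^n)).le
        positivity
  _ = x^u * ((c0^(-u) + c1^(-u))/2)^n := by
        simp_rw [← Finset.mul_sum]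
        rw [sum_Pr_rpow c0 c1 h0 h1 (-u) n,
          show ((c0^(-u) + c1^(-u))/2)^n = ((1:ℝ)/2)^n * (c0^(-u)+c1^(-u))^n by
            rw [← mul_pow]; ring_nf]
        ring

lemma mem_dyadic {y : ℝ} (hy0 : 0 ≤ y) (hy1 : y < 1) (n : ℕ) :
    ∃ k : ℕ, k < 2^n ∧ (k:ℝ)/2^n ≤ y ∧ y < ((k:ℝ)+1)/2^n := by
  have hp : (0:ℝ) < 2^n := by positivity
  have hfl0 : 0 ≤ ⌊(2:ℝ)^n*y⌋ := Int.floor_nonneg.2 (by positivity)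
  refine ⟨(⌊(2:ℝ)^n*y⌋).toNat, ?_, ?_, ?_⟩
  · have hlt : ⌊(2:ℝ)^n*y⌋ < (2:ℤ)^n := by
      rw [Int.floor_lt]; push_cast; nlinarith
    have hcc : ((2^n : ℕ) : ℤ) = (2:ℤ)^n := by push_cast; ring
    omega
  · have hcast : (((⌊(2:ℝ)^n*y⌋).toNat : ℕ):ℝ) = ((⌊(2:ℝ)^n*y⌋:ℤ):ℝ) := by
      exact_mod_cast Int.toNat_of_nonneg hfl0
    rw [hcast, div_le_iff₀ hp]
    have := Int.floor_le ((2:ℝ)^n*y)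
    linarith
  · have hcast : (((⌊(2:ℝ)^n*y⌋).toNat : ℕ):ℝ) = ((⌊(2:ℝ)^n*y⌋:ℤ):ℝ) := by
      exact_mod_cast Int.toNat_of_nonneg hfl0
    rw [hcast, lt_div_iff₀ hp]
    have := Int.lt_floor_add_one ((2:ℝ)^n*y)
    linarith

lemma measure_badshift_le (c0 c1 : ℝ) (h0 : 0 < c0) (h1 : 0 < c1) {u x : ℝ}
    (hu : 0 < u) (hx : 0 < x) (n : ℕ) (a : ℝ) :
    volume {t : ℝ | (t + a) ∈ Ico (0:ℝ) 1 ∧ x ≤ Pr c0 c1 n (t + a)}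
      ≤ ENNReal.ofReal (x^(-u) * ((c0^u + c1^u)/2)^n) := by
  set F := (Finset.range (2^n)).filter (fun k : ℕ => x ≤ Pr c0 c1 n ((k:ℝ)/2^n)) with hF
  have hsub : {t : ℝ | (t + a) ∈ Ico (0:ℝ) 1 ∧ x ≤ Pr c0 c1 n (t + a)} ⊆
      ⋃ k ∈ F, Ico ((k:ℝ)/2^n + -a) (((k:ℝ)+1)/2^n + -a) := by
    rintro t ⟨⟨hy0, hy1⟩, hPx⟩
    obtain ⟨k, hk, hk1, hk2⟩ := mem_dyadic hy0 hy1 n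
    have hkF : k ∈ F := by
      rw [hF, Finset.mem_filter]
      exact ⟨Finset.mem_range.2 hk, by rwa [← Pr_const_on_dyadic c0 c1 hk1 hk2]⟩
    apply Set.mem_biUnion hkF
    constructor <;> [linarith; linarith]
  refine le_trans (measure_mono hsub) (le_trans (measure_biUnion_dyadic_le F n (-a)) ?_)
  rw [← ENNReal.ofReal_natCast, ← ENNReal.ofReal_mul (Nat.cast_nonneg _)]
  exact ENNReal.ofReal_le_ofReal (card_filter_ge_le c0 c1 h0 h1 hu hx n)

lemma measure_badshift_le' (c0 c1 : ℝ) (h0 : 0 < c0) (h1 : 0 < c1) {u x : ℝ}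
    (hu : 0 < u) (hx : 0 < x) (n : ℕ) :
    volume {t : ℝ | t ∈ Ico (0:ℝ) 1 ∧ Pr c0 c1 n t ≤ x}
      ≤ ENNReal.ofReal (x^u * ((c0^(-u) + c1^(-u))/2)^n) := by
  set F := (Finset.range (2^n)).filter (fun k : ℕ => Pr c0 c1 n ((k:ℝ)/2^n) ≤ x) with hF
  have hsub : {t : ℝ | t ∈ Ico (0:ℝ) 1 ∧ Pr c0 c1 n t ≤ x} ⊆
      ⋃ k ∈ F, Ico ((k:ℝ)/2^n + -(0:ℝ)) (((k:ℝ)+1)/2^n + -(0:ℝ)) := by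
    rintro t ⟨⟨hy0, hy1⟩, hPx⟩
    obtain ⟨k, hk, hk1, hk2⟩ := mem_dyadic hy0 hy1 n
    have hkF : k ∈ F := by
      rw [hF, Finset.mem_filter]
      exact ⟨Finset.mem_range.2 hk, by rwa [← Pr_const_on_dyadic c0 c1 hk1 hk2]⟩
    apply Set.mem_biUnion hkF
    constructor <;> [linarith; linarith]
  refine le_trans (measure_mono hsub) (le_trans (measure_biUnion_dyadic_le F n (-0)) ?_)
  rw [← ENNReal.ofReal_natCast, ← ENNReal.ofReal_mul (Nat.cast_nonneg _)]
  exact ENNReal.ofReal_le_ofReal (card_filter_le_le c0 c1 h0 h1 hu hx n)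

lemma exists_rpow_lt_one {p q : ℝ} (hp : 0 < p) (hq : 0 < q) (hpq : p*q < 1) :
    ∃ u : ℝ, 0 < u ∧ (p^u + q^u)/2 < 1 := by
  set f : ℝ → ℝ := fun u => (p^u + q^u)/2 with hf
  set L : ℝ := (p^(0:ℝ)*Real.log p + q^(0:ℝ)*Real.log q)/2 with hL
  have hd : HasDerivAt f L 0 :=
    (((Real.hasStrictDerivAt_const_rpow hp 0).hasDerivAt).add
      ((Real.hasStrictDerivAt_const_rpow hq 0).hasDerivAt)).div_const 2
  have hLneg : L < 0 := by
    rw [hL, Real.rpow_zero, Real.rpow_zero, one_mul, one_mul]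
    have hlog : Real.log p + Real.log q = Real.log (p*q) := (Real.log_mul hp.ne' hq.ne').symm
    have : Real.log (p*q) < 0 := Real.log_neg (by positivity) hpq
    linarith
  have hslope : Tendsto (slope f 0) (𝓝[>] 0) (𝓝 L) :=
    ((hasDerivAt_iff_tendsto_slope).1 hd).mono_left
      (nhdsWithin_mono 0 (fun x hx => ne_of_gt hx))
  have h3 : ∀ᶠ u in 𝓝[>] (0:ℝ), slope f 0 u < 0 :=
    hslope.eventually_mem (Iio_mem_nhds hLneg)
  obtain ⟨u, hu1, hu2⟩ := (h3.and (eventually_mem_nhdsWithin)).exists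
  refine ⟨u, hu2, ?_⟩
  have hu0 : (0:ℝ) < u := hu2
  have hf0 : f 0 = 1 := by rw [hf]; simp
  have hs : slope f 0 u = (f u - 1)/(u - 0) := by rw [slope_def_field, hf0]
  rw [hs] at hu1
  have : f u - 1 < 0 := by
    by_contra hcon
    push_neg at hcon
    have : 0 ≤ (f u - 1)/(u - 0) := div_nonneg (by linarith) (by linarith)
    linarith
  have : f u < 1 := by linarith
  exact this

lemma ae_eventually_bound {s : ℕ → Set ℝ} {lam : ℝ} (h0 : 0 ≤ lam) (h1 : lam < 1)
    (hs : ∀ n, volume (s n) ≤ ENNReal.ofReal (lam^n)) :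
    ∀ᵐ t : ℝ, ∀ᶠ n in atTop, t ∉ s n := by
  apply MeasureTheory.ae_eventually_notMem
  have hle : ∑' n, volume (s n) ≤ ∑' n : ℕ, ENNReal.ofReal (lam^n) := ENNReal.tsum_le_tsum hs
  refine ne_top_of_le_ne_top ?_ hle
  have he : ∀ n : ℕ, ENNReal.ofReal (lam^n) = (ENNReal.ofReal lam)^n :=
    fun n => ENNReal.ofReal_pow h0 n
  rw [tsum_congr he, ENNReal.tsum_geometric]
  rw [ENNReal.inv_ne_top]
  have : ENNReal.ofReal lam < 1 := by
    rw [← ENNReal.ofReal_one]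
    exact ENNReal.ofReal_lt_ofReal_iff_of_nonneg h0 |>.2 h1
  exact (tsub_pos_iff_lt.2 this).ne'

lemma chain_gen (c0 c1 : ℝ) (G : ℝ → ℂ) (hGc : ContinuousOn G (Icc 0 1))
    (D q : ℝ) (hD : 0 ≤ D) (hq0 : 0 < q) (hq1 : q < 1)
    (hdiam : ∀ (m : ℕ) (x : ℝ), 0 ≤ x → x < 1 → ∀ s1 s2 : ℝ,
      s1 ∈ Icc (dll m x) (dll m x + (1/2)^m) → s2 ∈ Icc (dll m x) (dll m x + (1/2)^m) →
      Complex.abs (G s1 - G s2) ≤ D * Pr c0 c1 m x)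
    {t : ℝ} (ht0 : 0 ≤ t) (ht1 : t < 1)
    (hIcc : ∀ m : ℕ, Icc (dll m t) (dll m t + (1/2)^m) ⊆ Icc 0 1)
    {N : ℕ} (hP : ∀ m, N ≤ m → Pr c0 c1 m t ≤ q^m)
    (W : ℕ → ℝ) (hWm : ∀ m, W m ∈ Icc (dll m t) (dll m t + (1/2)^m))
    (hWm' : ∀ m, W (m+1) ∈ Icc (dll m t) (dll m t + (1/2)^m))
    {n : ℕ} (hn : N ≤ n) :
    Complex.abs (G t - G (W n)) ≤ D * q^n * (1-q)⁻¹ := by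
  -- geometric sum bound
  have hgeom : ∀ M : ℕ, (∑ m ∈ Finset.Ico n M, q^m) ≤ q^n * (1-q)⁻¹ := by
    intro M
    rw [Finset.sum_Ico_eq_sum_range]
    have : ∀ i ∈ Finset.range (M - n), q^(n+i) = q^n * q^i := fun i _ => pow_add q n i
    rw [Finset.sum_congr rfl this, ← Finset.mul_sum]
    have hsum : (∑ i ∈ Finset.range (M-n), q^i) ≤ (1-q)⁻¹ := by
      have hs := Summable.sum_le_tsum (Finset.range (M-n)) (fun i _ => (pow_nonneg hq0.le i))
        (summable_geometric_of_lt_one hq0.le hq1)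
      rwa [tsum_geometric_of_lt_one hq0.le hq1] at hs
    have := mul_le_mul_of_nonneg_left hsum (pow_nonneg hq0.le n)
    linarith
  -- telescoping
  have htel : ∀ M : ℕ, n ≤ M →
      Complex.abs (G t - G (W n)) ≤ D * (∑ m ∈ Finset.Ico n M, q^m)
        + Complex.abs (G t - G (W M)) := by
    intro M
    induction M with
    | zero => intro hM; interval_cases n; simp
    | succ M ihM =>
      intro hM
      rcases Nat.lt_or_ge n (M+1) with hlt | hge
      · have hnM : n ≤ M := by omega
        have h1 := ihM hnM
        have h2 : Complex.abs (G (W M) - G (W (M+1))) ≤ D * Pr c0 c1 M t :=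
          hdiam M t ht0 ht1 (W M) (W (M+1)) (hWm M) (hWm' M)
        have h3 : Pr c0 c1 M t ≤ q^M := hP M (le_trans hn hnM)
        have h4 : Complex.abs (G t - G (W M)) ≤
            Complex.abs (G t - G (W (M+1))) + Complex.abs (G (W (M+1)) - G (W M)) :=
          Complex.abs.sub_le _ _ _
        have h5 : Complex.abs (G (W (M+1)) - G (W M)) = Complex.abs (G (W M) - G (W (M+1))) :=
          AbsoluteValue.map_sub _ _ _
        rw [Finset.sum_Ico_succ_top hnM]
        have hDq : D * Pr c0 c1 M t ≤ D * q^M := mul_le_mul_of_nonneg_left h3 hD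
        calc Complex.abs (G t - G (W n))
            ≤ D * (∑ m ∈ Finset.Ico n M, q^m) + Complex.abs (G t - G (W M)) := h1
        _ ≤ D * (∑ m ∈ Finset.Ico n M, q^m) + (Complex.abs (G t - G (W (M+1)))
              + D * q^M) := by rw [h5] at h4; linarith
        _ = D * ((∑ m ∈ Finset.Ico n M, q^m) + q^M) + Complex.abs (G t - G (W (M+1))) := by
              ring
      · have : n = M+1 := by omega
        subst this
        simp
  -- convergence
  have hWlim : Tendsto W atTop (𝓝 t) := by
    have hub : ∀ M, W M ≤ t + (1/2)^M := by
      intro M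
      have := (hWm M).2
      have := dll_le_self M t
      linarith
    have hlb : ∀ M, t - (1/2)^M ≤ W M := by
      intro M
      have := (hWm M).1
      have := lt_dll_add M t
      linarith
    have hpow : Tendsto (fun M : ℕ => ((1:ℝ)/2)^M) atTop (𝓝 0) :=
      tendsto_pow_atTop_nhds_zero_of_lt_one (by norm_num) (by norm_num)
    have hupper : Tendsto (fun M : ℕ => t + ((1:ℝ)/2)^M) atTop (𝓝 t) := by
      simpa using (tendsto_const_nhds (x := t) (f := (atTop : Filter ℕ))).add hpow
    have hlower : Tendsto (fun M : ℕ => t - ((1:ℝ)/2)^M) atTop (𝓝 t) := by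
      simpa using (tendsto_const_nhds (x := t) (f := (atTop : Filter ℕ))).sub hpow
    exact tendsto_of_tendsto_of_tendsto_of_le_of_le hlower hupper hlb hub
  have hWIcc : ∀ M, W M ∈ Icc (0:ℝ) 1 := fun M => hIcc M (hWm M)
  have hGW : Tendsto (fun M => G (W M)) atTop (𝓝 (G t)) := by
    have hcw : ContinuousWithinAt G (Icc 0 1) t :=
      hGc.continuousWithinAt (by constructor <;> [exact ht0; linarith])
    exact hcw.tendsto.comp (tendsto_nhdsWithin_of_tendsto_nhds_of_eventually_within W hWlim
      (Eventually.of_forall hWIcc))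
  have habs : Tendsto (fun M => Complex.abs (G t - G (W M))) atTop (𝓝 0) := by
    have hsub : Tendsto (fun M => G t - G (W M)) atTop (𝓝 0) := by
      simpa using (tendsto_const_nhds (x := G t) (f := (atTop : Filter ℕ))).sub hGW
    have := (Complex.continuous_abs.tendsto 0).comp hsub
    rw [map_zero] at this; exact this
  have hev : ∀ᶠ M in atTop, Complex.abs (G t - G (W n)) - D * q^n * (1-q)⁻¹ ≤
      Complex.abs (G t - G (W M)) := by
    filter_upwards [eventually_ge_atTop n] with M hM
    have h1 := htel M hM
    have h2 := hgeom M
    have := mul_le_mul_of_nonneg_left h2 hD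
    linarith
  have := ge_of_tendsto habs hev
  linarith

lemma dll_succ_bounds (m : ℕ) (t : ℝ) :
    dll m t ≤ dll (m+1) t ∧ dll (m+1) t + (1/2)^(m+1) ≤ dll m t + (1/2)^m := by
  have hb := floor_two_mul_bounds ((2:ℝ)^m * t)
  rw [show 2*((2:ℝ)^m*t) = 2^(m+1)*t by ring] at hb
  set A := ((⌊(2:ℝ)^m*t⌋:ℤ):ℝ) with hA
  set B := ((⌊(2:ℝ)^(m+1)*t⌋:ℤ):ℝ) with hB
  have hb1 : 2*A ≤ B := by rw [hA, hB]; exact_mod_cast hb.1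
  have hb2 : B ≤ 2*A+1 := by rw [hA, hB]; exact_mod_cast hb.2
  have hp : (0:ℝ) < 2^m := by positivity
  have hq : ((1:ℝ)/2)^m = 1/2^m := one_div_pow _ _
  have hq1 : ((1:ℝ)/2)^(m+1) = 1/2^(m+1) := one_div_pow _ _
  have hmul : ∀ x : ℝ, x*(2:ℝ)^(m+1) = 2*x*2^m := fun x => by ring
  constructor
  · rw [dll, dll, ← hA, ← hB, div_le_div_iff₀ hp (by positivity : (0:ℝ) < 2^(m+1)), hmul A]
    nlinarith [hb1, hp]
  · rw [dll, dll, ← hA, ← hB, hq, hq1, ← add_div, ← add_div,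
      div_le_div_iff₀ (by positivity : (0:ℝ) < 2^(m+1)) hp, hmul (A+1)]
    nlinarith [hb2, hp]

lemma dyadic_subset (m : ℕ) {t : ℝ} (ht0 : 0 ≤ t) (ht1 : t < 1) :
    Icc (dll m t) (dll m t + (1/2)^m) ⊆ Icc 0 1 := by
  intro s hs
  have h1 : 0 ≤ dll m t := dll_nonneg ht0
  have hflt : ⌊(2:ℝ)^m*t⌋ < (2:ℤ)^m := by
    rw [Int.floor_lt]; push_cast; nlinarith [pow_pos (two_pos : (0:ℝ) < 2) m]
  have hF : ((⌊(2:ℝ)^m*t⌋ : ℤ) : ℝ) ≤ 2^m - 1 := by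
    have h : ⌊(2:ℝ)^m*t⌋ ≤ (2:ℤ)^m - 1 := by omega
    calc ((⌊(2:ℝ)^m*t⌋ : ℤ) : ℝ) ≤ (((2:ℤ)^m - 1 : ℤ) : ℝ) := by exact_mod_cast h
    _ = 2^m - 1 := by push_cast; ring
  have h2 : dll m t + (1/2)^m ≤ 1 := by
    rw [dll, one_div_pow, ← add_div, div_le_one (by positivity)]
    linarith
  exact ⟨le_trans h1 hs.1, le_trans hs.2 h2⟩

lemma exists_dyadic_scale {h : ℝ} (hpos : 0 < h) {n₀ : ℕ} (hh : h < (1/2:ℝ)^n₀) :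
    ∃ n : ℕ, n₀ ≤ n ∧ (1/2:ℝ)^(n+1) < h ∧ h ≤ (1/2:ℝ)^n := by
  classical
  have hex : ∃ m : ℕ, (1/2:ℝ)^m < h := by
    have hc : Tendsto (fun m : ℕ => ((1:ℝ)/2)^m) atTop (𝓝 0) :=
      tendsto_pow_atTop_nhds_zero_of_lt_one (by norm_num) (by norm_num)
    exact (hc.eventually_mem (Iio_mem_nhds hpos)).exists
  have hm₀ : (1/2:ℝ)^(Nat.find hex) < h := Nat.find_spec hex
  have hgt : n₀ < Nat.find hex := by
    by_contra hcon
    push_neg at hcon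
    have : (1/2:ℝ)^n₀ ≤ (1/2)^(Nat.find hex) :=
      pow_le_pow_of_le_one (by norm_num) (by norm_num) hcon
    linarith
  refine ⟨Nat.find hex - 1, by omega, ?_, ?_⟩
  · rw [show Nat.find hex - 1 + 1 = Nat.find hex by omega]; exact hm₀
  · have hmin := Nat.find_min hex (m := Nat.find hex - 1) (by omega)
    push_neg at hmin
    exact hmin

lemma local_est (c0 c1 : ℝ) (G : ℝ → ℂ) (hGc : ContinuousOn G (Icc 0 1))
    (D q : ℝ) (hD : 0 ≤ D) (hq0 : 0 < q) (hq1 : q < 1)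
    (hdiam : ∀ (m : ℕ) (x : ℝ), 0 ≤ x → x < 1 → ∀ s1 s2 : ℝ,
      s1 ∈ Icc (dll m x) (dll m x + (1/2)^m) → s2 ∈ Icc (dll m x) (dll m x + (1/2)^m) →
      Complex.abs (G s1 - G s2) ≤ D * Pr c0 c1 m x)
    {t : ℝ} (ht : t ∈ Ioo (0:ℝ) 1) {N : ℕ}
    (hA : ∀ m, N ≤ m → Pr c0 c1 m t ≤ q^m)
    (hB : ∀ n, N ≤ n → t + (1/2)^n < 1 → Pr c0 c1 n (t + (1/2)^n) ≤ q^n)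
    (hC : ∀ n, N ≤ n → (1/2:ℝ)^n ≤ t → Pr c0 c1 n (t - (1/2)^n) ≤ q^n)
    {s : ℝ} (hs : s ∈ Icc (0:ℝ) 1) {n : ℕ} (hn : N ≤ n)
    (hclose : |s - t| ≤ (1/2:ℝ)^n) :
    Complex.abs (G s - G t) ≤ D * q^n * ((1-q)⁻¹ + 1) := by
  have ht0 : 0 ≤ t := ht.1.le
  have ht1 : t < 1 := ht.2
  have hIcc : ∀ m : ℕ, Icc (dll m t) (dll m t + (1/2)^m) ⊆ Icc 0 1 :=
    fun m => dyadic_subset m ht0 ht1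
  have hppos : (0:ℝ) < (1/2:ℝ)^n := by positivity
  have hqn : (0:ℝ) ≤ q^n := pow_nonneg hq0.le n
  have hinv : (0:ℝ) ≤ (1-q)⁻¹ := by
    have : (0:ℝ) < 1 - q := by linarith
    positivity
  have htmem : t ∈ Icc (dll n t) (dll n t + (1/2)^n) :=
    ⟨dll_le_self n t, (lt_dll_add n t).le⟩
  -- chains
  have hWm1 : ∀ m : ℕ, (fun m => dll m t + (1/2:ℝ)^m) m ∈ Icc (dll m t) (dll m t + (1/2)^m) :=
    fun m => ⟨le_add_of_nonneg_right (by positivity), le_refl _⟩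
  have hWm1' : ∀ m : ℕ, (fun m => dll m t + (1/2:ℝ)^m) (m+1) ∈
      Icc (dll m t) (dll m t + (1/2)^m) := by
    intro m
    have hb := dll_succ_bounds m t
    constructor
    · have : (0:ℝ) ≤ (1/2:ℝ)^(m+1) := by positivity
      linarith [hb.1]
    · exact hb.2
  have hWm2 : ∀ m : ℕ, (fun m => dll m t) m ∈ Icc (dll m t) (dll m t + (1/2)^m) :=
    fun m => ⟨le_refl _, le_add_of_nonneg_right (by positivity)⟩
  have hWm2' : ∀ m : ℕ, (fun m => dll m t) (m+1) ∈ Icc (dll m t) (dll m t + (1/2)^m) := by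
    intro m
    have hb := dll_succ_bounds m t
    have : (0:ℝ) ≤ (1/2:ℝ)^(m+1) := by positivity
    exact ⟨hb.1, by linarith [hb.2]⟩
  have chainR := chain_gen c0 c1 G hGc D q hD hq0 hq1 hdiam ht0 ht1 hIcc hA
    (fun m => dll m t + (1/2:ℝ)^m) hWm1 hWm1' hn
  have chainL := chain_gen c0 c1 G hGc D q hD hq0 hq1 hdiam ht0 ht1 hIcc hA
    (fun m => dll m t) hWm2 hWm2' hn
  have hA' := hA n hn
  rcases le_total t s with hts | hts
  · rcases le_or_gt s (dll n t + (1/2)^n) with hcase | hcase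
    · -- same interval
      have hsmem : s ∈ Icc (dll n t) (dll n t + (1/2)^n) :=
        ⟨le_trans htmem.1 hts, hcase⟩
      have := hdiam n t ht0 ht1 s t hsmem htmem
      have hDq : D * Pr c0 c1 n t ≤ D * q^n := mul_le_mul_of_nonneg_left hA' hD
      have hDD : 0 ≤ D*q^n*(1-q)⁻¹ := by positivity
      nlinarith
    · -- right neighbour
      set y := t + (1/2:ℝ)^n with hy
      have hy0 : 0 ≤ y := by rw [hy]; positivity
      have hy1 : y < 1 := by
        by_contra hcon
        push_neg at hcon
        -- then dll n t + (1/2)^n ≥ 1 ≥ s, contradiction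
        have hfl : (2:ℤ)^n - 1 ≤ ⌊(2:ℝ)^n*t⌋ := by
          rw [Int.le_floor]
          push_cast
          have h2 : (2:ℝ)^n * (1/2:ℝ)^n = 1 := by
            rw [← mul_pow]; norm_num
          have hcon' : 1 ≤ t + (1/2:ℝ)^n := hcon
          nlinarith [mul_nonneg (pow_nonneg (by norm_num : (0:ℝ) ≤ 2) n)
            (by linarith : (0:ℝ) ≤ t - (1 - (1/2:ℝ)^n))]
        have hfl' : (2:ℝ)^n - 1 ≤ ((⌊(2:ℝ)^n*t⌋:ℤ):ℝ) := by
          calc (2:ℝ)^n - 1 = (((2:ℤ)^n - 1 : ℤ):ℝ) := by push_cast; ring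
          _ ≤ _ := by exact_mod_cast hfl
        have : (1:ℝ) ≤ dll n t + (1/2)^n := by
          rw [dll, one_div_pow, ← add_div, le_div_iff₀ (by positivity)]
          linarith
        linarith [hs.2]
      have hflr : ⌊(2:ℝ)^n*y⌋ = ⌊(2:ℝ)^n*t⌋ + 1 := by
        rw [show (2:ℝ)^n*y = 2^n*t + ((1:ℤ):ℝ) by
          have h2 : (2:ℝ)^n * (1/2:ℝ)^n = 1 := by rw [← mul_pow]; norm_num
          rw [hy]; push_cast; linear_combination h2]
        exact Int.floor_add_intCast _ _
      have hdlly : dll n y = dll n t + (1/2)^n := by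
        rw [dll, dll, hflr, one_div_pow]
        push_cast
        rw [← add_div]
      have hPy := hB n hn (by rw [← hy]; exact hy1)
      have hsmem : s ∈ Icc (dll n y) (dll n y + (1/2)^n) := by
        rw [hdlly]
        constructor
        · exact hcase.le
        · have habs : s - t ≤ (1/2:ℝ)^n := le_trans (le_abs_self _) hclose
          linarith [lt_dll_add n t]
      have hrmem : dll n t + (1/2)^n ∈ Icc (dll n y) (dll n y + (1/2)^n) := by
        rw [hdlly]
        exact ⟨le_refl _, by linarith⟩
      have h2 := hdiam n y hy0 hy1 s (dll n t + (1/2)^n) hsmem hrmem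
      have hDy : D * Pr c0 c1 n y ≤ D * q^n := mul_le_mul_of_nonneg_left hPy hD
      have h3 : Complex.abs (G s - G t) ≤ Complex.abs (G s - G (dll n t + (1/2)^n))
          + Complex.abs (G t - G (dll n t + (1/2)^n)) := by
        have := Complex.abs.sub_le (G s) (G (dll n t + (1/2)^n)) (G t)
        have he : Complex.abs (G (dll n t + (1/2)^n) - G t)
            = Complex.abs (G t - G (dll n t + (1/2)^n)) := AbsoluteValue.map_sub _ _ _
        linarith
      linarith [h2, hDy, chainR, h3]
  · rcases le_or_gt (dll n t) s with hcase | hcase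
    · have hsmem : s ∈ Icc (dll n t) (dll n t + (1/2)^n) :=
        ⟨hcase, le_trans hts htmem.2⟩
      have := hdiam n t ht0 ht1 s t hsmem htmem
      have hDq : D * Pr c0 c1 n t ≤ D * q^n := mul_le_mul_of_nonneg_left hA' hD
      have hDD : 0 ≤ D*q^n*(1-q)⁻¹ := by positivity
      nlinarith
    · -- left neighbour
      have hs0 : 0 ≤ s := hs.1
      have hllpos : 0 < dll n t := lt_of_le_of_lt hs0 hcase
      have hFpos : (1:ℝ) ≤ ((⌊(2:ℝ)^n*t⌋:ℤ):ℝ) := by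
        have h1 : (0:ℤ) < ⌊(2:ℝ)^n*t⌋ := by
          by_contra hcon
          push_neg at hcon
          have : ((⌊(2:ℝ)^n*t⌋:ℤ):ℝ) ≤ 0 := by exact_mod_cast hcon
          have : dll n t ≤ 0 := by
            rw [dll, div_nonpos_iff]
            exact Or.inr ⟨this, by positivity⟩
          linarith
        have : (1:ℤ) ≤ ⌊(2:ℝ)^n*t⌋ := h1
        exact_mod_cast this
      have hguard : (1/2:ℝ)^n ≤ t := by
        have : (1/2:ℝ)^n ≤ dll n t := by
          rw [dll, one_div_pow, div_le_div_iff₀ (by positivity) (by positivity)]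
          nlinarith [pow_pos (two_pos : (0:ℝ) < 2) n]
        linarith [dll_le_self n t]
      set y := t - (1/2:ℝ)^n with hy
      have hy0 : 0 ≤ y := by rw [hy]; linarith
      have hy1 : y < 1 := by rw [hy]; linarith
      have hflr : ⌊(2:ℝ)^n*y⌋ = ⌊(2:ℝ)^n*t⌋ + (-1) := by
        rw [show (2:ℝ)^n*y = 2^n*t + ((-1:ℤ):ℝ) by
          have h2 : (2:ℝ)^n * (1/2:ℝ)^n = 1 := by rw [← mul_pow]; norm_num
          rw [hy]; push_cast; linear_combination -h2]
        exact Int.floor_add_intCast _ _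
      have hdlly : dll n y = dll n t - (1/2)^n := by
        rw [dll, dll, hflr, one_div_pow]
        push_cast
        ring
      have hPy := hC n hn hguard
      have hsmem : s ∈ Icc (dll n y) (dll n y + (1/2)^n) := by
        rw [hdlly]
        constructor
        · have habs : t - s ≤ (1/2:ℝ)^n := by
            have := neg_abs_le (s - t)
            linarith [hclose]
          linarith [dll_le_self n t]
        · linarith
      have hlmem : dll n t ∈ Icc (dll n y) (dll n y + (1/2)^n) := by
        rw [hdlly]
        exact ⟨by linarith, by linarith⟩
      have h2 := hdiam n y hy0 hy1 s (dll n t) hsmem hlmem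
      have hDy : D * Pr c0 c1 n y ≤ D * q^n := mul_le_mul_of_nonneg_left hPy hD
      have h3 : Complex.abs (G s - G t) ≤ Complex.abs (G s - G (dll n t))
          + Complex.abs (G t - G (dll n t)) := by
        have := Complex.abs.sub_le (G s) (G (dll n t)) (G t)
        have he : Complex.abs (G (dll n t) - G t)
            = Complex.abs (G t - G (dll n t)) := AbsoluteValue.map_sub _ _ _
        linarith
      linarith [h2, hDy, chainL, h3]

lemma good_hasDeriv (c0 c1 : ℝ) (G : ℝ → ℂ) (hGc : ContinuousOn G (Icc 0 1))
    (D q : ℝ) (hD : 0 ≤ D) (hq0 : 0 < q) (hq1 : q < 1/2)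
    (hdiam : ∀ (m : ℕ) (x : ℝ), 0 ≤ x → x < 1 → ∀ s1 s2 : ℝ,
      s1 ∈ Icc (dll m x) (dll m x + (1/2)^m) → s2 ∈ Icc (dll m x) (dll m x + (1/2)^m) →
      Complex.abs (G s1 - G s2) ≤ D * Pr c0 c1 m x)
    {t : ℝ} (ht : t ∈ Ioo (0:ℝ) 1) {N : ℕ}
    (hA : ∀ m, N ≤ m → Pr c0 c1 m t ≤ q^m)
    (hB : ∀ n, N ≤ n → t + (1/2)^n < 1 → Pr c0 c1 n (t + (1/2)^n) ≤ q^n)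
    (hC : ∀ n, N ≤ n → (1/2:ℝ)^n ≤ t → Pr c0 c1 n (t - (1/2)^n) ≤ q^n) :
    HasDerivWithinAt G 0 (Icc (0:ℝ) 1) t := by
  have hq1' : q < 1 := by linarith
  rw [hasDerivWithinAt_iff_tendsto_slope]
  rw [Metric.tendsto_nhdsWithin_nhds]
  intro ε hε
  set D' := D * ((1-q)⁻¹ + 1) with hD'
  have hD'0 : 0 ≤ D' := by
    have : (0:ℝ) < 1 - q := by linarith
    rw [hD']
    positivity
  have h2q : 0 ≤ 2*q := by linarith
  have h2q1 : 2*q < 1 := by linarith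
  have hconv : Tendsto (fun n : ℕ => 2*D'*(2*q)^n) atTop (𝓝 0) := by
    have := (tendsto_pow_atTop_nhds_zero_of_lt_one h2q h2q1).const_mul (2*D')
    simpa using this
  obtain ⟨n₁, hn₁⟩ := (hconv.eventually_mem (Iio_mem_nhds hε)).exists_forall_of_atTop
  set n₂ := max n₁ N with hn₂
  refine ⟨(1/2:ℝ)^(n₂+1), by positivity, ?_⟩
  intro s hsmem hdist
  have hst : s ≠ t := fun h => hsmem.2 (by simp [h])
  have habs0 : 0 < |s - t| := abs_sub_pos.2 hst
  rw [Real.dist_eq] at hdist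
  have hlt : |s - t| < (1/2:ℝ)^n₂ := by
    have : ((1:ℝ)/2)^(n₂+1) < (1/2)^n₂ := by
      apply pow_lt_pow_right_of_lt_one₀ <;> norm_num
    linarith
  obtain ⟨n, hnge, hlow, hup⟩ := exists_dyadic_scale habs0 hlt
  have hnN : N ≤ n := le_trans (le_max_right n₁ N) hnge
  have hn1 : n₁ ≤ n := le_trans (le_max_left n₁ N) hnge
  have hest := local_est c0 c1 G hGc D q hD hq0 hq1' hdiam ht hA hB hC hsmem.1 hnN hup
  -- slope bound
  have hslope : dist (slope G t s) 0 = |s - t|⁻¹ * Complex.abs (G s - G t) := by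
    rw [dist_zero_right, slope_def_module, norm_smul, norm_inv, Real.norm_eq_abs,
      Complex.norm_eq_abs]
  rw [hslope]
  have hpow2 : |s - t|⁻¹ ≤ ((1/2:ℝ)^(n+1))⁻¹ := by
    apply inv_anti₀ (by positivity) hlow.le
  have habs1 : Complex.abs (G s - G t) ≤ D' * q^n := by
    rw [hD']; calc Complex.abs (G s - G t) ≤ D * q^n * ((1-q)⁻¹+1) := hest
    _ = D * ((1-q)⁻¹+1) * q^n := by ring
  calc |s - t|⁻¹ * Complex.abs (G s - G t) ≤ ((1/2:ℝ)^(n+1))⁻¹ * (D' * q^n) := by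
        apply mul_le_mul hpow2 habs1 (by positivity) (by positivity)
  _ = 2*D'*(2*q)^n := by
        rw [one_div_pow, one_div, inv_inv, mul_pow, pow_succ]
        ring
  _ < ε := hn₁ n hn1

lemma good_not_diff (c0 c1 : ℝ) (h0 : 0 < c0) (h1 : 0 < c1) (G : ℝ → ℂ)
    (hend : ∀ (n : ℕ) {x : ℝ}, 0 ≤ x → x < 1 →
      Complex.abs (G (dll n x + (1/2)^n) - G (dll n x)) = Pr c0 c1 n x)
    {t : ℝ} (ht : t ∈ Ioo (0:ℝ) 1) {σ : ℝ} (hσ : 1 < σ) {N : ℕ}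
    (hA : ∀ n, N ≤ n → (σ/2)^n ≤ Pr c0 c1 n t) :
    ¬ DifferentiableWithinAt ℝ G (Icc (0:ℝ) 1) t := by
  intro hdiff
  have hfd := hdiff.hasFDerivWithinAt
  set L := fderivWithin ℝ G (Icc (0:ℝ) 1) t with hL
  have hev := (Asymptotics.isLittleO_iff.1 hfd.isLittleO) one_pos
  rw [eventually_nhdsWithin_iff, Metric.eventually_nhds_iff] at hev
  obtain ⟨δ, hδ, hev⟩ := hev
  -- pick n
  have hσt : Tendsto (fun n : ℕ => σ^n) atTop atTop := tendsto_pow_atTop_atTop_of_one_lt hσ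
  have hσev : ∀ᶠ n : ℕ in atTop, 2 + ‖L‖ < σ^n := hσt.eventually_gt_atTop _
  have hpev : ∀ᶠ n : ℕ in atTop, ((1:ℝ)/2)^n < δ :=
    (tendsto_pow_atTop_nhds_zero_of_lt_one (by norm_num) (by norm_num)).eventually_mem
      (Iio_mem_nhds hδ)
  have hNev : ∀ᶠ n : ℕ in atTop, N ≤ n := eventually_ge_atTop N
  obtain ⟨n, hn1, hn2, hn3⟩ := (hσev.and (hpev.and hNev)).exists
  have ht0 : 0 ≤ t := ht.1.le
  have ht1 : t < 1 := ht.2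
  obtain ⟨l, r, hl, hr⟩ : ∃ l r : ℝ, l = dll n t ∧ r = dll n t + (1/2:ℝ)^n :=
    ⟨_, _, rfl, rfl⟩
  have hlmem : l ∈ Icc (0:ℝ) 1 := dyadic_subset n ht0 ht1
    ⟨hl.ge, by rw [hl]; exact le_add_of_nonneg_right (by positivity)⟩
  have hrmem : r ∈ Icc (0:ℝ) 1 := dyadic_subset n ht0 ht1
    ⟨by rw [hr]; exact le_add_of_nonneg_right (by positivity), hr.le⟩
  have hld : dist l t < δ := by
    rw [Real.dist_eq, abs_sub_comm, abs_of_nonneg (by linarith [dll_le_self n t, hl.le])]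
    linarith [lt_dll_add n t, hl.le]
  have hrd : dist r t < δ := by
    rw [Real.dist_eq, abs_of_nonneg (by linarith [lt_dll_add n t, hr.le])]
    linarith [dll_le_self n t, hr.le]
  have hel := hev hld hlmem
  have her := hev hrd hrmem
  -- combine
  have hdec : G r - G l = (G r - G t - L (r - t)) - (G l - G t - L (l - t)) + L (r - l) := by
    have : L (r - t) - L (l - t) = L (r - l) := by rw [← map_sub]; congr 1; ring
    rw [← this]; ring
  have hLb : ‖L (r - l)‖ ≤ ‖L‖ * (1/2:ℝ)^n := by
    calc ‖L (r - l)‖ ≤ ‖L‖ * ‖r - l‖ := L.le_opNorm _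
    _ = ‖L‖ * (1/2)^n := by
        congr 1
        rw [hr, hl]
        simp [Real.norm_eq_abs]
  have hnorm : Complex.abs (G r - G l) ≤ (2 + ‖L‖) * (1/2:ℝ)^n := by
    rw [← Complex.norm_eq_abs, hdec]
    have h1 : ‖G r - G t - L (r - t)‖ ≤ (1/2:ℝ)^n := by
      refine le_trans her ?_
      rw [one_mul, Real.norm_eq_abs, abs_of_nonneg (by linarith [lt_dll_add n t, hr.le])]
      linarith [dll_le_self n t, hr.le]
    have h2 : ‖G l - G t - L (l - t)‖ ≤ (1/2:ℝ)^n := by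
      refine le_trans hel ?_
      rw [one_mul, Real.norm_eq_abs, abs_sub_comm,
        abs_of_nonneg (by linarith [dll_le_self n t, hl.le])]
      linarith [lt_dll_add n t, hl.le]
    calc ‖G r - G t - L (r - t) - (G l - G t - L (l - t)) + L (r - l)‖
        ≤ ‖G r - G t - L (r - t) - (G l - G t - L (l - t))‖ + ‖L (r - l)‖ := norm_add_le _ _
    _ ≤ ‖G r - G t - L (r - t)‖ + ‖G l - G t - L (l - t)‖ + ‖L (r - l)‖ := by
        have := norm_sub_le (G r - G t - L (r - t)) (G l - G t - L (l - t))
        linarith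
    _ ≤ (2 + ‖L‖) * (1/2:ℝ)^n := by
        have := hLb
        linarith [h1, h2]
  have hPr : (σ/2)^n ≤ Pr c0 c1 n t := hA n hn3
  have hPrend : Complex.abs (G r - G l) = Pr c0 c1 n t := by
    rw [hr, hl]; exact hend n ht0 ht1
  have hfinal : σ^n ≤ 2 + ‖L‖ := by
    have hh : (σ/2)^n ≤ (2 + ‖L‖) * (1/2:ℝ)^n := by
      rw [← hPrend] at hPr
      linarith
    have he : (σ/2:ℝ)^n = σ^n * (1/2)^n := by
      rw [← mul_pow]; congr 1; ring
    rw [he] at hh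
    have hp : (0:ℝ) < (1/2:ℝ)^n := by positivity
    exact le_of_mul_le_mul_right (by linarith) hp
  linarith

lemma choose_part3 {a b : ℝ} (ha : 0 < a) (hb : 0 < b) (h : a*b < 1/4) :
    ∃ u ρ lam : ℝ, 0 < u ∧ 0 < ρ ∧ ρ < 1 ∧ 0 ≤ lam ∧ lam < 1 ∧
      ∀ n : ℕ, (((ρ/2)^n : ℝ))^(-u) * ((a^u + b^u)/2)^n ≤ lam^n := by
  obtain ⟨u, hu, hlt⟩ := exists_rpow_lt_one (p := 2*a) (q := 2*b)
    (by linarith) (by linarith) (by nlinarith)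
  set g := ((2*a)^u + (2*b)^u)/2 with hg
  have hg0 : 0 < g := by
    have := Real.rpow_pos_of_pos (show (0:ℝ) < 2*a by linarith) u
    have := Real.rpow_pos_of_pos (show (0:ℝ) < 2*b by linarith) u
    rw [hg]; linarith
  set ρ := g^((2*u)⁻¹) with hρ
  have hρ0 : 0 < ρ := Real.rpow_pos_of_pos hg0 _
  have hρ1 : ρ < 1 := Real.rpow_lt_one hg0.le hlt (by positivity)
  set lam := (ρ/2)^(-u) * ((a^u + b^u)/2) with hlam
  have hab : 0 < (a^u + b^u)/2 := by
    have := Real.rpow_pos_of_pos ha u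
    have := Real.rpow_pos_of_pos hb u
    positivity
  have hlam0 : 0 ≤ lam := by
    have : (0:ℝ) < (ρ/2)^(-u) := Real.rpow_pos_of_pos (by positivity) _
    rw [hlam]; positivity
  have hlameq : lam = g^((1:ℝ)/2) := by
    have h1 : (ρ/2)^(-u) = ρ^(-u) * 2^u := by
      rw [Real.div_rpow hρ0.le (by norm_num), Real.rpow_neg (by norm_num : (0:ℝ) ≤ 2)]
      field_simp
    have h2 : ρ^(-u) = g^(-(1:ℝ)/2) := by
      rw [hρ, ← Real.rpow_mul hg0.le]
      congr 1
      field_simp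
    have h3 : 2^u * ((a^u + b^u)/2) = g := by
      rw [hg, Real.mul_rpow (by norm_num : (0:ℝ) ≤ 2) ha.le,
        Real.mul_rpow (by norm_num : (0:ℝ) ≤ 2) hb.le]
      ring
    rw [hlam, h1, h2, mul_assoc, h3]
    calc g^(-1/2 : ℝ) * g = g^(-1/2 : ℝ) * g^(1:ℝ) := by rw [Real.rpow_one]
    _ = g^((-1/2 : ℝ)+1) := (Real.rpow_add hg0 _ _).symm
    _ = g^((1:ℝ)/2) := by norm_num
  have hlam1 : lam < 1 := by
    rw [hlameq]
    exact Real.rpow_lt_one hg0.le hlt (by norm_num)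
  refine ⟨u, ρ, lam, hu, hρ0, hρ1, hlam0, hlam1, fun n => ?_⟩
  have hkey : (((ρ/2)^n : ℝ))^(-u) = ((ρ/2)^(-u))^n := by
    rw [← Real.rpow_natCast (ρ/2) n, ← Real.rpow_mul (by positivity), mul_comm,
      Real.rpow_mul (by positivity), Real.rpow_natCast]
  rw [hkey, hlam, ← mul_pow]

lemma choose_part4 {a b : ℝ} (ha : 0 < a) (hb : 0 < b) (h : 1/4 < a*b) :
    ∃ u σ lam : ℝ, 0 < u ∧ 1 < σ ∧ 0 ≤ lam ∧ lam < 1 ∧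
      ∀ n : ℕ, (((σ/2)^n : ℝ))^u * ((a^(-u) + b^(-u))/2)^n ≤ lam^n := by
  obtain ⟨u, hu, hlt⟩ := exists_rpow_lt_one (p := 1/(2*a)) (q := 1/(2*b))
    (by positivity) (by positivity)
    (by rw [div_mul_div_comm, one_mul, div_lt_one (by positivity)]; nlinarith)
  set g := ((1/(2*a))^u + (1/(2*b))^u)/2 with hg
  have hg0 : 0 < g := by
    have := Real.rpow_pos_of_pos (show (0:ℝ) < 1/(2*a) by positivity) u
    have := Real.rpow_pos_of_pos (show (0:ℝ) < 1/(2*b) by positivity) u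
    rw [hg]; linarith
  set σ := g^(-(2*u)⁻¹) with hσ
  have hσ0 : 0 < σ := Real.rpow_pos_of_pos hg0 _
  have hσ1 : 1 < σ := by
    rw [hσ]
    rw [Real.one_lt_rpow_iff_of_pos hg0]
    right
    constructor
    · exact hlt
    · rw [neg_lt, neg_zero]; positivity
  set lam := (σ/2)^u * ((a^(-u) + b^(-u))/2) with hlam
  have hab : 0 < (a^(-u) + b^(-u))/2 := by
    have := Real.rpow_pos_of_pos ha (-u)
    have := Real.rpow_pos_of_pos hb (-u)
    positivity
  have hlam0 : 0 ≤ lam := by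
    have : (0:ℝ) < (σ/2)^u := Real.rpow_pos_of_pos (by positivity) _
    rw [hlam]; positivity
  have hlameq : lam = g^((1:ℝ)/2) := by
    have h1 : (σ/2)^u = σ^u * (2:ℝ)^(-u) := by
      rw [Real.div_rpow hσ0.le (by norm_num), Real.rpow_neg (by norm_num : (0:ℝ) ≤ 2)]
      field_simp
    have h2 : σ^u = g^(-(1:ℝ)/2) := by
      rw [hσ, ← Real.rpow_mul hg0.le]
      congr 1
      field_simp
    have h3 : (2:ℝ)^(-u) * ((a^(-u) + b^(-u))/2) = g := by
      rw [hg]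
      have e1 : (1/(2*a))^u = (2:ℝ)^(-u) * a^(-u) := by
        rw [one_div, Real.inv_rpow (by positivity), ← Real.rpow_neg (by positivity),
          Real.mul_rpow (by norm_num : (0:ℝ) ≤ 2) ha.le]
      have e2 : (1/(2*b))^u = (2:ℝ)^(-u) * b^(-u) := by
        rw [one_div, Real.inv_rpow (by positivity), ← Real.rpow_neg (by positivity),
          Real.mul_rpow (by norm_num : (0:ℝ) ≤ 2) hb.le]
      rw [e1, e2]
      ring
    rw [hlam, h1, h2, mul_assoc, h3]
    calc g^(-1/2 : ℝ) * g = g^(-1/2 : ℝ) * g^(1:ℝ) := by rw [Real.rpow_one]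
    _ = g^((-1/2 : ℝ)+1) := (Real.rpow_add hg0 _ _).symm
    _ = g^((1:ℝ)/2) := by norm_num
  have hlam1 : lam < 1 := by
    rw [hlameq]
    exact Real.rpow_lt_one hg0.le hlt (by norm_num)
  refine ⟨u, σ, lam, hu, hσ1, hlam0, hlam1, fun n => ?_⟩
  have hkey : (((σ/2)^n : ℝ))^u = ((σ/2)^u)^n := by
    rw [← Real.rpow_natCast (σ/2) n, ← Real.rpow_mul (by positivity), mul_comm,
      Real.rpow_mul (by positivity), Real.rpow_natCast]
  rw [hkey, hlam, ← mul_pow]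

end


/-- **Example 2.3: complex linear de Rham curves.** Let `η ∈ ℂ` with `0 < |η| < 1` and
`0 < |1-η| < 1`, `f₀(z) = η z̄`, `f₁(z) = η + (1-η) z̄`, and let `G : [0,1] → ℂ` be the
unique continuous solution of `G(t) = f₀(G(2t))` for `0 ≤ t ≤ 1/2`, `G(t) = f₁(G(2t-1))`
for `1/2 ≤ t ≤ 1`, with `G(0) = 0`, `G(1) = 1`. Then `α = β = -log₂|η(1-η)|/2`; if
`|η(1-η)| < 1/4` the Fréchet derivative of `G` exists and is zero Lebesgue-a.e., and if
`|η(1-η)| > 1/4` then `G` is not Fréchet differentiable at Lebesgue-a.e. `t`. -/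
theorem deRham_complex_linear (η : ℂ)
    (hη0 : 0 < ‖η‖) (hη1 : ‖η‖ < 1)
    (hη0' : 0 < ‖1 - η‖) (hη1' : ‖1 - η‖ < 1)
    (G : ℝ → ℂ)
    (hGc : ContinuousOn G (Set.Icc 0 1))
    (hGeq0 : ∀ t : ℝ, 0 ≤ t → t ≤ 1 / 2 → G t = fLin η 0 (G (2 * t)))
    (hGeq1 : ∀ t : ℝ, 1 / 2 ≤ t → t ≤ 1 → G t = fLin η 1 (G (2 * t - 1)))
    (hG0 : G 0 = 0) (hG1 : G 1 = 1) :
    alphaLin η G = -Real.logb 2 (‖η * (1 - η)‖) / 2 ∧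
    betaLin η G = -Real.logb 2 (‖η * (1 - η)‖) / 2 ∧
    (‖η * (1 - η)‖ < 1 / 4 →
      ∀ᵐ t ∂(volume.restrict (Set.Ioo (0 : ℝ) 1)),
        HasDerivWithinAt G 0 (Set.Icc (0 : ℝ) 1) t) ∧
    (1 / 4 < ‖η * (1 - η)‖ →
      ∀ᵐ t ∂(volume.restrict (Set.Ioo (0 : ℝ) 1)),
        ¬ DifferentiableWithinAt ℝ G (Set.Icc (0 : ℝ) 1) t) := by
  simp only [Complex.norm_eq_abs] at hη0 hη1 hη0' hη1' ⊢
  have hη : η ≠ 0 := fun h => by rw [h] at hη0; simp at hη0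
  have hη' : 1 - η ≠ 0 := fun h => by rw [h] at hη0'; simp at hη0'
  set c0 := Complex.abs η with hc0
  set c1 := Complex.abs (1-η) with hc1
  obtain ⟨C, hC⟩ := isCompact_Icc.exists_bound_of_continuousOn hGc
  set D := 2*C with hDdef
  have hDnn : 0 ≤ D := by
    have h1 := hC 0 ⟨le_refl _, zero_le_one⟩
    have h2 := norm_nonneg (G 0)
    rw [hDdef]; linarith
  have hkey := keyS η G hGeq0 hGeq1
  have hdiam : ∀ (m : ℕ) (x : ℝ), 0 ≤ x → x < 1 → ∀ s1 s2 : ℝ,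
      s1 ∈ Set.Icc (dll m x) (dll m x + (1/2)^m) →
      s2 ∈ Set.Icc (dll m x) (dll m x + (1/2)^m) →
      Complex.abs (G s1 - G s2) ≤ D * Pr c0 c1 m x := by
    intro m x hx0 hx1 s1 s2 hs1 hs2
    rw [hkey m x hx0 hx1 s1 s2 hs1 hs2]
    have hppow : (2:ℝ)^m * (1/2)^m = 1 := by rw [← mul_pow]; norm_num
    have h2m : (0:ℝ) < 2^m := by positivity
    have hu1 : (2:ℝ)^m*(s1 - dll m x) ∈ Set.Icc (0:ℝ) 1 := by
      constructor
      · nlinarith [hs1.1]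
      · nlinarith [hs1.2]
    have hu2 : (2:ℝ)^m*(s2 - dll m x) ∈ Set.Icc (0:ℝ) 1 := by
      constructor
      · nlinarith [hs2.1]
      · nlinarith [hs2.2]
    have hb : Complex.abs (G ((2:ℝ)^m*(s1 - dll m x)) - G ((2:ℝ)^m*(s2 - dll m x))) ≤ D := by
      rw [← Complex.norm_eq_abs]
      calc ‖G ((2:ℝ)^m*(s1 - dll m x)) - G ((2:ℝ)^m*(s2 - dll m x))‖
          ≤ ‖G ((2:ℝ)^m*(s1 - dll m x))‖ + ‖G ((2:ℝ)^m*(s2 - dll m x))‖ := norm_sub_le _ _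
      _ ≤ D := by
          have := hC _ hu1
          have := hC _ hu2
          rw [hDdef]; linarith
    have hPnn : 0 ≤ Pr c0 c1 m x := (Pr_pos hη0 hη0' m x).le
    calc Pr c0 c1 m x * Complex.abs (G ((2:ℝ)^m*(s1 - dll m x)) - G ((2:ℝ)^m*(s2 - dll m x)))
        ≤ Pr c0 c1 m x * D := mul_le_mul_of_nonneg_left hb hPnn
    _ = D * Pr c0 c1 m x := mul_comm _ _
  have hend : ∀ (n : ℕ) {x : ℝ}, 0 ≤ x → x < 1 →
      Complex.abs (G (dll n x + (1/2)^n) - G (dll n x)) = Pr c0 c1 n x := by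
    intro n x hx0 hx1
    have h := hkey n x hx0 hx1 (dll n x + (1/2)^n) (dll n x)
      ⟨le_add_of_nonneg_right (by positivity), le_refl _⟩
      ⟨le_refl _, le_add_of_nonneg_right (by positivity)⟩
    rw [h]
    have e1 : (2:ℝ)^n*((dll n x + (1/2)^n) - dll n x) = 1 := by
      rw [show (dll n x + (1/2:ℝ)^n) - dll n x = (1/2:ℝ)^n by ring, ← mul_pow]
      norm_num
    have e2 : (2:ℝ)^n*(dll n x - dll n x) = 0 := by ring
    rw [e1, e2, hG1, hG0]
    simp
    rfl
  refine ⟨alphaLin_eval η hη hη' G, betaLin_eval η hη hη' G, ?_, ?_⟩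
  · -- part 3: derivative zero a.e.
    intro hsmall
    rw [map_mul] at hsmall
    obtain ⟨u, ρ, lam, hu, hρ0, hρ1, hlam0, hlam1, hineq⟩ := choose_part3 hη0 hη0' hsmall
    set q := ρ/2 with hq
    have hq0 : 0 < q := by rw [hq]; positivity
    have hq12 : q < 1/2 := by rw [hq]; linarith
    set S0 : ℕ → Set ℝ := fun n =>
      {t : ℝ | (t + 0) ∈ Set.Ico (0:ℝ) 1 ∧ q^n ≤ Pr c0 c1 n (t + 0)} with hS0
    set SR : ℕ → Set ℝ := fun n =>
      {t : ℝ | (t + (1/2:ℝ)^n) ∈ Set.Ico (0:ℝ) 1 ∧ q^n ≤ Pr c0 c1 n (t + (1/2)^n)} with hSR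
    set SL : ℕ → Set ℝ := fun n =>
      {t : ℝ | (t + -(1/2:ℝ)^n) ∈ Set.Ico (0:ℝ) 1 ∧ q^n ≤ Pr c0 c1 n (t + -(1/2)^n)} with hSL
    have hb0 : ∀ n : ℕ, volume (S0 n) ≤ ENNReal.ofReal (lam^n) := fun n =>
      le_trans (measure_badshift_le c0 c1 hη0 hη0' hu (by positivity) n 0)
        (ENNReal.ofReal_le_ofReal (hineq n))
    have hbR : ∀ n : ℕ, volume (SR n) ≤ ENNReal.ofReal (lam^n) := fun n =>
      le_trans (measure_badshift_le c0 c1 hη0 hη0' hu (by positivity) n ((1/2)^n))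
        (ENNReal.ofReal_le_ofReal (hineq n))
    have hbL : ∀ n : ℕ, volume (SL n) ≤ ENNReal.ofReal (lam^n) := fun n =>
      le_trans (measure_badshift_le c0 c1 hη0 hη0' hu (by positivity) n (-(1/2)^n))
        (ENNReal.ofReal_le_ofReal (hineq n))
    have hae0 := ae_eventually_bound hlam0 hlam1 hb0
    have haeR := ae_eventually_bound hlam0 hlam1 hbR
    have haeL := ae_eventually_bound hlam0 hlam1 hbL
    rw [ae_restrict_iff' measurableSet_Ioo]
    filter_upwards [hae0, haeR, haeL] with t h0t hRt hLt htIoo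
    obtain ⟨N, hN⟩ := eventually_atTop.1 ((h0t.and hRt).and hLt)
    apply good_hasDeriv c0 c1 G hGc D q hDnn hq0 hq12 hdiam htIoo (N := N)
    · intro m hm
      by_contra hcon
      push_neg at hcon
      exact ((hN m hm).1).1
        ⟨by rw [add_zero]; exact ⟨htIoo.1.le, htIoo.2⟩, by rw [add_zero]; exact hcon.le⟩
    · intro n hn hlt1
      by_contra hcon
      push_neg at hcon
      exact ((hN n hn).1).2
        ⟨⟨add_nonneg htIoo.1.le (by positivity), hlt1⟩, hcon.le⟩
    · intro n hn hguard
      by_contra hcon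
      push_neg at hcon
      refine (hN n hn).2 ⟨⟨?_, ?_⟩, ?_⟩
      · rw [← sub_eq_add_neg]; linarith
      · rw [← sub_eq_add_neg]
        have : (0:ℝ) < (1/2:ℝ)^n := by positivity
        linarith [htIoo.2]
      · rw [← sub_eq_add_neg]; exact hcon.le
  · -- part 4: nowhere differentiable a.e.
    intro hbig
    rw [map_mul] at hbig
    obtain ⟨u, σ, lam, hu, hσ1, hlam0, hlam1, hineq⟩ := choose_part4 hη0 hη0' hbig
    set S4 : ℕ → Set ℝ := fun n =>
      {t : ℝ | t ∈ Set.Ico (0:ℝ) 1 ∧ Pr c0 c1 n t ≤ (σ/2)^n} with hS4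
    have hb4 : ∀ n : ℕ, volume (S4 n) ≤ ENNReal.ofReal (lam^n) := fun n =>
      le_trans (measure_badshift_le' c0 c1 hη0 hη0' hu
        (by positivity : (0:ℝ) < (σ/2)^n) n) (ENNReal.ofReal_le_ofReal (hineq n))
    have hae := ae_eventually_bound hlam0 hlam1 hb4
    rw [ae_restrict_iff' measurableSet_Ioo]
    filter_upwards [hae] with t h4t htIoo
    obtain ⟨N, hN⟩ := eventually_atTop.1 h4t
    apply good_not_diff c0 c1 hη0 hη0' G hend htIoo hσ1 (N := N)
    intro n hn
    by_contra hcon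
    push_neg at hcon
    exact hN n hn ⟨⟨htIoo.1.le, htIoo.2⟩, hcon.le⟩
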